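/- Let (X, Σ, μ) be a probability space and let π, u : X → ℝ be measurable functions with 0 < m ≤ π(x) ≤ u(x) for all x ∈ X and with η := ∫ u dμ < ∞. Set γ := ∫ π dμ (so 0 < γ ≤ η), and define the probability measures ℓ = (π/γ)·μ and q = (u/η)·μ. Then the Kullback–Leibler divergence satisfies KL(q ‖ ℓ) ≤ ∫ (log u(x) − log π(x)) dq(x) ≤ (1/m) ∫ (u(x) − π(x)) dq(x). -/

import Mathlib

open MeasureTheory

/-- **Core KL bound in the proof of Theorem 4 (BORE paper).** On a probability
space `(X, Σ, μ)`, let `π, u` be measurable with `0 < m ≤ π ≤ u` and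
`η = ∫ u dμ < ∞` (i.e. `u` integrable); set `γ = ∫ π dμ` and consider the
probability measures `ℓ = (π/γ)·μ` and `q = (u/η)·μ`. Then
`KL(q ‖ ℓ) = ∫ log((u/η)/(π/γ)) dq ≤ ∫ (log u - log π) dq ≤ (1/m) ∫ (u - π) dq`. -/
theorem kl_bound_dominating_density {X : Type*} [MeasurableSpace X]
    (μ : Measure X) [IsProbabilityMeasure μ]
    (π u : X → ℝ) (hπmeas : Measurable π) (humeas : Measurable u)
    (m : ℝ) (hm : 0 < m) (hmπ : ∀ x, m ≤ π x) (hπu : ∀ x, π x ≤ u x)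
    (hu_int : Integrable u μ)
    (γ η : ℝ) (hγ : γ = ∫ x, π x ∂μ) (hη : η = ∫ x, u x ∂μ)
    (ℓ q : Measure X)
    (hℓ : ℓ = μ.withDensity fun x => ENNReal.ofReal (π x / γ))
    (hq : q = μ.withDensity fun x => ENNReal.ofReal (u x / η))
    (hint_log : Integrable (fun x => Real.log (u x) - Real.log (π x)) q)
    (hint_gap : Integrable (fun x => u x - π x) q) :
    (∫ x, Real.log ((u x / η) / (π x / γ)) ∂q) ≤
        (∫ x, (Real.log (u x) - Real.log (π x)) ∂q) ∧
      (∫ x, (Real.log (u x) - Real.log (π x)) ∂q) ≤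
        (1 / m) * ∫ x, (u x - π x) ∂q := by
  have hπpos : ∀ x, 0 < π x := fun x => lt_of_lt_of_le hm (hmπ x)
  have hupos : ∀ x, 0 < u x := fun x => lt_of_lt_of_le (hπpos x) (hπu x)
  have hπ_int : Integrable π μ :=
    hu_int.mono hπmeas.aestronglyMeasurable
      (Filter.Eventually.of_forall fun x => by
        rw [Real.norm_eq_abs, Real.norm_eq_abs, abs_of_pos (hπpos x),
          abs_of_pos (hupos x)]
        exact hπu x)
  have hγpos : 0 < γ := by
    rw [hγ]
    calc (0:ℝ) < m := hm
    _ = ∫ _x, m ∂μ := by simp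
    _ ≤ ∫ x, π x ∂μ := integral_mono (integrable_const m) hπ_int hmπ
  have hηpos : 0 < η := by
    rw [hη]
    calc (0:ℝ) < γ := hγpos
    _ = ∫ x, π x ∂μ := hγ
    _ ≤ ∫ x, u x ∂μ := integral_mono hπ_int hu_int hπu
  have hγη : γ ≤ η := by
    rw [hγ, hη]; exact integral_mono hπ_int hu_int hπu
  have hqfin : IsFiniteMeasure q := by
    rw [hq]
    refine isFiniteMeasure_withDensity ?_
    have := (hu_int.div_const η).hasFiniteIntegral
    rw [hasFiniteIntegral_iff_ofReal
      (Filter.Eventually.of_forall fun x =>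
        div_nonneg (hupos x).le hηpos.le)] at this
    exact this.ne
  constructor
  · have key : ∀ x, Real.log ((u x / η) / (π x / γ)) =
        (Real.log (u x) - Real.log (π x)) + Real.log (γ / η) := by
      intro x
      rw [Real.log_div (div_pos (hupos x) hηpos).ne' (div_pos (hπpos x) hγpos).ne',
        Real.log_div (hupos x).ne' hηpos.ne', Real.log_div (hπpos x).ne' hγpos.ne',
        Real.log_div hγpos.ne' hηpos.ne']
      ring
    simp_rw [key]
    rw [integral_add hint_log (integrable_const _), integral_const]
    have h1 : Real.log (γ / η) ≤ 0 :=
      Real.log_nonpos (div_nonneg hγpos.le hηpos.le)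
        ((div_le_one hηpos).mpr hγη)
    rw [smul_eq_mul]
    nlinarith [measureReal_nonneg (μ := q) (s := Set.univ)]
  · have key : ∀ x, Real.log (u x) - Real.log (π x) ≤ (1 / m) * (u x - π x) := by
      intro x
      have h1 : Real.log (u x) - Real.log (π x) = Real.log (u x / π x) := by
        rw [Real.log_div (hupos x).ne' (hπpos x).ne']
      have h2 : Real.log (u x / π x) ≤ u x / π x - 1 :=
        Real.log_le_sub_one_of_pos (div_pos (hupos x) (hπpos x))
      have h3 : u x / π x - 1 = (u x - π x) / π x := by
        rw [sub_div, div_self (hπpos x).ne.symm]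
      have h4 : (u x - π x) / π x ≤ (u x - π x) / m :=
        div_le_div_of_nonneg_left (sub_nonneg.mpr (hπu x)) hm (hmπ x)
      calc Real.log (u x) - Real.log (π x) = Real.log (u x / π x) := h1
      _ ≤ u x / π x - 1 := h2
      _ = (u x - π x) / π x := h3
      _ ≤ (u x - π x) / m := h4
      _ = (1 / m) * (u x - π x) := by ring
    calc ∫ x, (Real.log (u x) - Real.log (π x)) ∂q
        ≤ ∫ x, (1 / m) * (u x - π x) ∂q :=
          integral_mono hint_log (hint_gap.const_mul _) key
      _ = (1 / m) * ∫ x, (u x - π x) ∂q := integral_const_mul _ _
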